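/- Let (G,σ) and (H,σ') be finite simple graphs with linear orders on their vertex sets, and let τ be any quasi-lexicographic order on V(G□H). Then the coloring produced by the First-Fit coloring of (G□H, lex) coincides (vertex by vertex) with the coloring produced by the First-Fit coloring of (G□H, τ); in particular FF(G□H, lex) = FF(G□H, τ). -/

import Mathlib

open SimpleGraph

/-- First-Fit (greedy) coloring of `G` with respect to the vertex ordering given by the
injective position function `ord` (vertex `u` comes before `v` iff `ord u < ord v`).
Each vertex receives the smallest positive integer not used on earlier neighbors. -/
noncomputable def firstFit {V : Type*} (G : SimpleGraph V) (ord : V → ℕ) : V → ℕ :=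
  (InvImage.wf ord Nat.lt_wfRel.wf).fix
    (fun v ih => sInf {c : ℕ | 1 ≤ c ∧ ∀ u, ∀ h : ord u < ord v, G.Adj u v → ih u h ≠ c})

/-- `FFColors G ord` is the number of colors used by the First-Fit coloring. -/
noncomputable def FFColors {V : Type*} [Fintype V] (G : SimpleGraph V) (ord : V → ℕ) : ℕ :=
  (Finset.univ.image (firstFit G ord)).card

open Classical in
/-- First-Fit coloring of `(G, ord)` subject to the pre-coloring `C₀` on the set `S`:
vertices of `S` keep their pre-assigned colors and are skipped by the scan; every other
vertex receives the smallest positive integer not already assigned (or pre-assigned)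
to a neighbor. -/
noncomputable def firstFitWith {V : Type*} (G : SimpleGraph V) (ord : V → ℕ)
    (S : Set V) (C₀ : V → ℕ) : V → ℕ :=
  (InvImage.wf ord Nat.lt_wfRel.wf).fix
    (fun v ih =>
      if v ∈ S then C₀ v
      else sInf {c : ℕ | 1 ≤ c ∧ (∀ u, G.Adj u v → u ∈ S → C₀ u ≠ c) ∧
        ∀ u, ∀ h : ord u < ord v, G.Adj u v → u ∉ S → ih u h ≠ c})

/-- Position function of the lexicographic order on `V × W` induced by the position
functions `σ` on `V` and `σ'` on `W` (for injective `σ, σ'`: `(u,v)` comes before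
`(u',v')` iff `σ u < σ u'`, or `u = u'` and `σ' v < σ' v'`). -/
noncomputable def lexPos {V W : Type*} [Fintype W] (σ : V → ℕ) (σ' : W → ℕ) : V × W → ℕ :=
  fun p => σ p.1 * (Finset.univ.sup σ' + 1) + σ' p.2

/-- A proper coloring with colors in the positive integers. -/
def IsProperColoring {V : Type*} (G : SimpleGraph V) (C : V → ℕ) : Prop :=
  (∀ v, 1 ≤ C v) ∧ ∀ ⦃u v⦄, G.Adj u v → C u ≠ C v

/-- `D` is a `(C, ord)`-descent: `D = {v} ∪ N` where `C v = y`, `x < y` is a (positive)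
color, `N` is the set of neighbors of `v` of color `x`, and every `u ∈ N` comes after
`v` in the order. -/
def IsDescent {V : Type*} (G : SimpleGraph V) (ord : V → ℕ) (C : V → ℕ) (D : Set V) : Prop :=
  ∃ v x, 1 ≤ x ∧ x < C v ∧
    (∀ u, G.Adj u v → C u = x → ord v < ord u) ∧
    D = insert v {u | G.Adj u v ∧ C u = x}

/-- The Grundy number: the maximum of `FFColors G ord` over all vertex orderings. -/
noncomputable def grundy {V : Type*} [Fintype V] (G : SimpleGraph V) : ℕ :=
  sSup {n | ∃ ord : V → ℕ, Function.Injective ord ∧ FFColors G ord = n}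

/-- The independence number of `G`. -/
noncomputable def indepNum {V : Type*} [Fintype V] (G : SimpleGraph V) : ℕ :=
  sSup {n | ∃ s : Finset V, (∀ u ∈ s, ∀ v ∈ s, ¬ G.Adj u v) ∧ s.card = n}

/-- An `m × n` Latin rectangle: entries in `{1, …, n}`, no repeats in rows or columns. -/
def IsLatinRectangle {m n : ℕ} (R : Fin m → Fin n → ℕ) : Prop :=
  (∀ i j, R i j ∈ Finset.Icc 1 n) ∧ (∀ i, Function.Injective (R i)) ∧
    (∀ j, Function.Injective (fun i => R i j))

/-- `S` is a greedy defining set of the rectangle `R` (cells scanned in lexicographic,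
i.e. row-by-row, order): the greedy completion, which skips the cells of `S` (fixed to
their values in `R`) and places in each other cell the smallest positive integer not yet
appearing in its row or column, reproduces `R`.  This is First-Fit on the rook's graph
`K_m □ K_n` subject to the pre-coloring of `S` by `R`. -/
noncomputable def IsRectGDS {m n : ℕ} (R : Fin m → Fin n → ℕ) (S : Set (Fin m × Fin n)) : Prop :=
  firstFitWith ((⊤ : SimpleGraph (Fin m)).boxProd (⊤ : SimpleGraph (Fin n)))
    (lexPos Fin.val Fin.val) S (fun p => R p.1 p.2) = fun p => R p.1 p.2

/-- The Latin square `L_k` of order `2^k`: the entry in row `i`, column `j` is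
`2^k - (i XOR j)`; equivalently the `k`-fold tensor product of `[[2,1],[1,2]]`. -/
def Lsquare (k : ℕ) : Fin (2 ^ k) → Fin (2 ^ k) → ℕ :=
  fun i j => 2 ^ k - (i.val ^^^ j.val)

lemma firstFit_eq {V : Type*} (G : SimpleGraph V) (ord : V → ℕ) (v : V) :
    firstFit G ord v =
      sInf {c : ℕ | 1 ≤ c ∧ ∀ u, ord u < ord v → G.Adj u v → firstFit G ord u ≠ c} := by
  unfold firstFit
  rw [WellFounded.fix_eq]

/-- For any quasi-lexicographic order `τ` on `V(G □ H)`, the First-Fit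
coloring of `(G □ H, lex)` coincides with that of `(G □ H, τ)`; in particular
`FF(G □ H, lex) = FF(G □ H, τ)`. -/
theorem firstFit_quasiLex_eq_lex {V W : Type*} [Fintype V] [Fintype W]
    (G : SimpleGraph V) (H : SimpleGraph W)
    (σ : V → ℕ) (σ' : W → ℕ) (hσ : Function.Injective σ) (hσ' : Function.Injective σ')
    (τ : V × W → ℕ) (hτ : Function.Injective τ)
    (hquasi : ∀ p q : V × W, τ p < τ q → σ p.1 < σ q.1 ∨ σ' p.2 < σ' q.2) :
    firstFit (G.boxProd H) (lexPos σ σ') = firstFit (G.boxProd H) τ ∧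
      FFColors (G.boxProd H) (lexPos σ σ') = FFColors (G.boxProd H) τ := by
  have key : ∀ p q : V × W, (G.boxProd H).Adj p q →
      (lexPos σ σ' p < lexPos σ σ' q ↔ τ p < τ q) := by
    intro p q hpq
    rw [SimpleGraph.boxProd_adj] at hpq
    have hMpos : 0 < Finset.univ.sup σ' + 1 := Nat.succ_pos _
    rcases hpq with ⟨hG, h2⟩ | ⟨hH, h1⟩
    · -- same second coordinate
      have hne : p ≠ q := fun h => hG.ne (congrArg Prod.fst h)
      have hτne : τ p ≠ τ q := fun h => hne (hτ h)
      have hσ'e : σ' p.2 = σ' q.2 := by rw [h2]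
      have hlexiff : lexPos σ σ' p < lexPos σ σ' q ↔ σ p.1 < σ q.1 := by
        unfold lexPos
        rw [h2]
        constructor
        · intro h
          by_contra hle
          push_neg at hle
          have := Nat.mul_le_mul_right (Finset.univ.sup σ' + 1) hle
          omega
        · intro h
          have := mul_lt_mul_of_pos_right h hMpos
          omega
      rw [hlexiff]
      constructor
      · intro h
        rcases lt_trichotomy (τ p) (τ q) with h' | h' | h'
        · exact h'
        · exact absurd h' hτne
        · rcases hquasi q p h' with h'' | h''
          · omega
          · omega
      · intro h
        rcases hquasi p q h with h'' | h''
        · exact h''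
        · omega
    · -- same first coordinate
      have hne : p ≠ q := fun h => hH.ne (congrArg Prod.snd h)
      have hτne : τ p ≠ τ q := fun h => hne (hτ h)
      have hσe : σ p.1 = σ q.1 := by rw [h1]
      have hlexiff : lexPos σ σ' p < lexPos σ σ' q ↔ σ' p.2 < σ' q.2 := by
        unfold lexPos
        rw [h1]
        omega
      rw [hlexiff]
      constructor
      · intro h
        rcases lt_trichotomy (τ p) (τ q) with h' | h' | h'
        · exact h'
        · exact absurd h' hτne
        · rcases hquasi q p h' with h'' | h''
          · omega
          · omega
      · intro h
        rcases hquasi p q h with h'' | h''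
        · omega
        · exact h''
  have main : ∀ n, ∀ p : V × W, τ p = n →
      firstFit (G.boxProd H) (lexPos σ σ') p = firstFit (G.boxProd H) τ p := by
    intro n
    induction n using Nat.strong_induction_on with
    | _ n ih =>
      intro p hp
      rw [firstFit_eq, firstFit_eq]
      congr 1
      ext c
      simp only [Set.mem_setOf_eq]
      constructor
      · rintro ⟨h1, h2⟩
        refine ⟨h1, fun u hu hadj => ?_⟩
        have htu : τ u < n := hp ▸ hu
        rw [← ih (τ u) htu u rfl]
        exact h2 u ((key u p hadj).mpr (hp ▸ hu)) hadj
      · rintro ⟨h1, h2⟩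
        refine ⟨h1, fun u hu hadj => ?_⟩
        have htu : τ u < τ p := (key u p hadj).mp hu
        rw [ih (τ u) (hp ▸ htu) u rfl]
        exact h2 u htu hadj
  have hfun : firstFit (G.boxProd H) (lexPos σ σ') = firstFit (G.boxProd H) τ :=
    funext fun p => main (τ p) p rfl
  exact ⟨hfun, by rw [FFColors, FFColors, hfun]⟩
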